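/- For n ≥ 1 and 2 ≤ k ≤ 2n-2 with k ≠ n, the partial sum trinomial coefficients satisfy S(n,k) = S(n-1,k-2) + S(n-1,k-1) + S(n-1,k); and for k = n ≥ 2, S(n,n) = S(n-1,n-2) + S(n-1,n-1) + S(n-1,n) + 1. -/

import Mathlib

open Finset

/-- Trinomial coefficient: coefficient of x^i in (1+x+x^2)^n, zero for i<0 (and automatically zero for i>2n). -/
def T (n : ℕ) (i : ℤ) : ℕ :=
  if 0 ≤ i then ∑ j ∈ Finset.range (i.toNat + 1), n.choose j * j.choose (i.toNat - j) else 0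

/-- Partial sum trinomial coefficient. -/
def S (n : ℕ) (k : ℤ) : ℕ :=
  ∑ j ∈ Finset.range (n + 1), T (n - j) (k - j)

open Polynomial

lemma coeff_pow_tri (n m : ℕ) :
    ((1 + X + X^2 : ℕ[X])^n).coeff m
      = ∑ j ∈ Finset.range (n+1), (if j ≤ m then j.choose (m - j) else 0) * n.choose j := by
  have h1 : (1 + X + X^2 : ℕ[X]) = (X + X^2) + 1 := by ring
  rw [h1, add_pow, finset_sum_coeff]
  refine Finset.sum_congr rfl fun j hj => ?_
  have h2 : (X + X^2 : ℕ[X])^j = (1+X)^j * X^j := by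
    rw [show (X + X^2 : ℕ[X]) = (1+X) * X by ring, mul_pow]
  rw [one_pow, mul_one, h2, ← C_eq_natCast, coeff_mul_C, coeff_mul_X_pow',
    coeff_one_add_X_pow, Nat.cast_id, Nat.cast_id]

lemma T_eq (n m : ℕ) : T n (m : ℤ) = ((1 + X + X^2 : ℕ[X])^n).coeff m := by
  rw [T, if_pos (by exact_mod_cast Nat.zero_le m), Int.toNat_natCast, coeff_pow_tri]
  set N := max m n + 1 with hN
  have hmN : m + 1 ≤ N := Nat.succ_le_succ (le_max_left _ _)
  have hnN : n + 1 ≤ N := Nat.succ_le_succ (le_max_right _ _)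
  have hL : ∑ j ∈ Finset.range (m+1), n.choose j * j.choose (m - j)
      = ∑ j ∈ Finset.range N, (if j ≤ m then n.choose j * j.choose (m - j) else 0) := by
    rw [Finset.sum_congr rfl (fun j hj => (if_pos (Nat.lt_succ_iff.mp (Finset.mem_range.mp hj))).symm)]
    exact Finset.sum_subset (Finset.range_subset_range.2 hmN)
      (fun j _ hj => if_neg (by simp only [Finset.mem_range, not_lt, Nat.lt_succ_iff] at hj ⊢; omega))
  have hR : ∑ j ∈ Finset.range (n+1), (if j ≤ m then j.choose (m - j) else 0) * n.choose j
      = ∑ j ∈ Finset.range N, (if j ≤ m then n.choose j * j.choose (m - j) else 0) := by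
    rw [Finset.sum_subset (Finset.range_subset_range.2 hnN)]
    · refine Finset.sum_congr rfl fun j hj => ?_
      rw [ite_mul, zero_mul, mul_comm]
    · intro j hj hj'
      simp only [Finset.mem_range, not_lt] at hj'
      rw [Nat.choose_eq_zero_of_lt hj', mul_zero]
  rw [hL, hR]

lemma T_neg (n : ℕ) {i : ℤ} (h : i < 0) : T n i = 0 := by
  rw [T, if_neg (by omega)]

lemma T_zero (i : ℤ) : T 0 i = if i = 0 then 1 else 0 := by
  rcases lt_or_ge i 0 with h | h
  · rw [T_neg 0 h, if_neg (by omega)]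
  · lift i to ℕ using h with m
    rw [T_eq, pow_zero, coeff_one]
    simp [Int.natCast_eq_zero]

lemma coeff_tri_mul (q : ℕ[X]) (m : ℕ) :
    ((1 + X + X^2 : ℕ[X]) * q).coeff m
      = q.coeff m + (if 1 ≤ m then q.coeff (m-1) else 0)
        + (if 2 ≤ m then q.coeff (m-2) else 0) := by
  have h : (1 + X + X^2 : ℕ[X]) * q = q + X^1 * q + X^2 * q := by ring
  rw [h, coeff_add, coeff_add, coeff_X_pow_mul', coeff_X_pow_mul']

lemma T_rec (n : ℕ) (k : ℤ) : T (n+1) k = T n (k-2) + T n (k-1) + T n k := by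
  rcases lt_or_ge k 0 with h | h
  · rw [T_neg _ h, T_neg n (by omega), T_neg n (by omega), T_neg n h]
  rcases lt_or_ge k 1 with h0 | h1
  · obtain rfl : k = 0 := by omega
    rw [show (0:ℤ) = ((0:ℕ):ℤ) by norm_num, T_eq, T_eq, pow_succ, mul_comm, coeff_tri_mul]
    rw [T_neg n (by norm_num), T_neg n (by norm_num)]
    simp
  rcases lt_or_ge k 2 with h2 | h2
  · obtain rfl : k = 1 := by omega
    rw [show (1:ℤ) - 2 = -1 by norm_num, T_neg n (by norm_num),
      show (1:ℤ) - 1 = ((0:ℕ):ℤ) by norm_num,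
      show (1:ℤ) = ((1:ℕ):ℤ) by norm_num, T_eq, T_eq, T_eq,
      pow_succ, mul_comm, coeff_tri_mul]
    simp only [le_refl, if_pos, Nat.sub_self]
    norm_num [Nat.add_comm]
  · obtain ⟨m, rfl⟩ : ∃ m : ℕ, k = (m:ℤ) + 2 := ⟨(k-2).toNat, by omega⟩
    rw [show (m:ℤ) + 2 = ((m+2:ℕ):ℤ) by push_cast; ring]
    rw [show ((m+2:ℕ):ℤ) - 1 = ((m+1:ℕ):ℤ) by push_cast; ring]
    rw [show ((m+2:ℕ):ℤ) - 2 = ((m:ℕ):ℤ) by push_cast; ring]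
    rw [T_eq, T_eq, T_eq, T_eq, pow_succ, mul_comm, coeff_tri_mul]
    rw [if_pos (by omega), if_pos (by omega)]
    simp only [Nat.add_sub_cancel]
    rw [show m + 2 - 1 = m + 1 by omega]
    ring

lemma S_rec (n : ℕ) (k : ℤ) :
    S (n+1) k = S n (k-2) + S n (k-1) + S n k + (if k = (n:ℤ)+1 then 1 else 0) := by
  rw [S, Finset.sum_range_succ]
  have hlast : T (n + 1 - (n+1)) (k - ((n+1:ℕ):ℤ)) = if k = (n:ℤ)+1 then 1 else 0 := by
    rw [Nat.sub_self, T_zero]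
    exact if_congr (by push_cast; omega) rfl rfl
  rw [hlast]
  congr 1
  have hstep : ∀ j ∈ Finset.range (n+1),
      T (n + 1 - j) (k - j) = T (n-j) (k-2-j) + T (n-j) (k-1-j) + T (n-j) (k-j) := by
    intro j hj
    rw [Finset.mem_range, Nat.lt_succ_iff] at hj
    rw [show n + 1 - j = (n - j) + 1 by omega, T_rec]
    rw [show k - j - 2 = k - 2 - j by ring, show k - j - 1 = k - 1 - j by ring]
  rw [Finset.sum_congr rfl hstep, Finset.sum_add_distrib, Finset.sum_add_distrib]
  rw [S, S, S]

theorem partial_sum_three_term (n : ℕ) :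
    (∀ k : ℤ, 1 ≤ n → 2 ≤ k → k ≤ 2 * n - 2 → k ≠ n →
      S n k = S (n - 1) (k - 2) + S (n - 1) (k - 1) + S (n - 1) k) ∧
    (2 ≤ n →
      S n n = S (n - 1) ((n : ℤ) - 2) + S (n - 1) ((n : ℤ) - 1) + S (n - 1) n + 1) := by
  constructor
  · intro k hn h2 h3 hkn
    obtain ⟨m, rfl⟩ : ∃ m, n = m + 1 := ⟨n - 1, by omega⟩
    rw [Nat.add_sub_cancel, S_rec, if_neg (by push_cast at hkn ⊢; omega), add_zero]
  · intro hn
    obtain ⟨m, rfl⟩ : ∃ m, n = m + 1 := ⟨n - 1, by omega⟩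
    rw [Nat.add_sub_cancel]
    have h := S_rec m ((m:ℤ)+1)
    rw [if_pos rfl] at h
    rw [show ((m+1:ℕ):ℤ) = (m:ℤ)+1 by push_cast; ring]
    exact h
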